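/- Let A be a commutative ring, V a free A-module of rank n with basis e₁,…,eₙ, and s = ∑ sᵢeᵢ ∈ V. The Koszul complex Λ^• V* with differential ι_s is exact if the ideal (s₁,…,sₙ) equals A, i.e. if s generates the unit ideal componentwise. -/

import Mathlib

namespace KoszulAux

variable {A : Type*} [CommRing A] {V : Type*} [AddCommGroup V] [Module A V]

/-- Polarization: swapping two adjacent arguments of a multilinear map that vanishes
on adjacent equal arguments changes the sign. -/
theorem swap_eq_neg {n : ℕ} (M : MultilinearMap A (fun _ : Fin n => V) A)
    (H : ∀ (v : Fin n → V) (a b : Fin n), (a : ℕ) + 1 = b → v a = v b → M v = 0)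
    (v : Fin n → V) (a b : Fin n) (hab : (a : ℕ) + 1 = b) :
    M (Function.update (Function.update v a (v b)) b (v a)) = - M v := by
  have hne : a ≠ b := by
    intro h; rw [h] at hab; omega
  have key : M (Function.update (Function.update v a (v a + v b)) b (v a + v b)) = 0 := by
    refine H _ a b hab ?_
    simp [Function.update_apply, hne]
  have expand1 : M (Function.update (Function.update v a (v a + v b)) b (v a + v b))
      = M (Function.update (Function.update v a (v a + v b)) b (v a))
        + M (Function.update (Function.update v a (v a + v b)) b (v b)) :=
    M.map_update_add _ b (v a) (v b)
  have expand2 : ∀ y, M (Function.update (Function.update v a (v a + v b)) b y)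
      = M (Function.update (Function.update v a (v a)) b y)
        + M (Function.update (Function.update v a (v b)) b y) := by
    intro y
    have e1 : ∀ x : V, Function.update (Function.update v a x) b y
        = Function.update (Function.update v b y) a x := fun x => Function.update_comm hne x y v
    rw [e1 (v a + v b), e1 (v a), e1 (v b)]
    exact M.map_update_add _ a (v a) (v b)
  have Tvava : M (Function.update (Function.update v a (v a)) b (v a)) = 0 := by
    refine H _ a b hab ?_
    simp [Function.update_apply, hne]
  have Tvbvb : M (Function.update (Function.update v a (v b)) b (v b)) = 0 := by
    refine H _ a b hab ?_
    simp [Function.update_apply, hne]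
  have Tvavb : M (Function.update (Function.update v a (v a)) b (v b)) = M v := by
    rw [Function.update_eq_self, Function.update_eq_self]
  rw [expand1, expand2, expand2, Tvava, Tvbvb, Tvavb, zero_add, add_zero] at key
  exact eq_neg_of_add_eq_zero_left key

/-- A multilinear map vanishing whenever two adjacent arguments are equal is alternating. -/
theorem alt_of_adjacent {n : ℕ} (M : MultilinearMap A (fun _ : Fin n => V) A)
    (H : ∀ (v : Fin n → V) (a b : Fin n), (a : ℕ) + 1 = b → v a = v b → M v = 0) :
    ∀ (v : Fin n → V) (i j : Fin n), v i = v j → i ≠ j → M v = 0 := by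
  suffices h : ∀ (d : ℕ) (v : Fin n → V) (i j : Fin n),
      (j : ℕ) = (i : ℕ) + d + 1 → v i = v j → M v = 0 by
    intro v i j hv hij
    rcases Nat.lt_or_ge (i : ℕ) (j : ℕ) with h1 | h1
    · exact h ((j : ℕ) - (i : ℕ) - 1) v i j (by omega) hv
    · have h2 : (j : ℕ) < (i : ℕ) := by
        rcases Nat.lt_or_ge (j : ℕ) (i : ℕ) with h2 | h2
        · exact h2
        · exact absurd (Fin.ext (by omega) : i = j) hij
      exact h ((i : ℕ) - (j : ℕ) - 1) v j i (by omega) hv.symm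
  intro d
  induction d with
  | zero =>
    intro v i j hd hv
    exact H v i j (by omega) hv
  | succ d ih =>
    intro v i j hd hv
    have hjn : (j : ℕ) - 1 < n := by omega
    set j' : Fin n := ⟨(j : ℕ) - 1, hjn⟩ with hj'def
    have hj'j : (j' : ℕ) + 1 = j := by simp only [hj'def]; omega
    have hij' : (j' : ℕ) = (i : ℕ) + d + 1 := by simp only [hj'def]; omega
    have hswap := swap_eq_neg M H v j' j hj'j
    set w := Function.update (Function.update v j' (v j)) j (v j') with hw
    have hi1 : i ≠ j' := by
      intro h; rw [h] at hij'; omega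
    have hi2 : i ≠ j := by
      intro h; rw [h] at hd; omega
    have hwj' : w j' = v j := by
      have : j' ≠ j := by intro h; rw [h] at hj'j; omega
      rw [hw, Function.update_of_ne this, Function.update_self]
    have hwi : w i = v i := by
      rw [hw, Function.update_of_ne hi2, Function.update_of_ne hi1]
    have h0 : M w = 0 := ih w i j' hij' (by rw [hwi, hwj']; exact hv)
    rw [h0] at hswap
    exact neg_eq_zero.mp hswap.symm

variable {k : ℕ}

/-- The underlying multilinear map of the wedge of a linear form with an alternating map. -/
def wedgeMul (τ : V →ₗ[A] A) (f : V [⋀^Fin (k + 1)]→ₗ[A] A) :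
    MultilinearMap A (fun _ : Fin (k + 2) => V) A :=
  ∑ i : Fin (k + 2), (-1 : A) ^ (i : ℕ) •
    MultilinearMap.domDomCongr (i.cycleRange.symm : Fin (k + 2) ≃ Fin (k + 2))
      (LinearMap.uncurryLeft (τ.smulRight f.toMultilinearMap))

theorem wedgeMul_apply (τ : V →ₗ[A] A) (f : V [⋀^Fin (k + 1)]→ₗ[A] A) (v : Fin (k + 2) → V) :
    wedgeMul τ f v
      = ∑ i : Fin (k + 2), (-1 : A) ^ (i : ℕ) * (τ (v i) * f fun j => v (i.succAbove j)) := by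
  rw [wedgeMul, MultilinearMap.sum_apply]
  refine Finset.sum_congr rfl fun i _ => ?_
  simp only [MultilinearMap.smul_apply, MultilinearMap.domDomCongr_apply,
    LinearMap.uncurryLeft_apply, LinearMap.smulRight_apply, AlternatingMap.coe_multilinearMap,
    smul_eq_mul, Fin.cycleRange_symm_zero]
  congr 2
  exact congrArg f (funext fun j => by
    show v (i.cycleRange.symm j.succ) = v (i.succAbove j)
    rw [Fin.cycleRange_symm_succ])

theorem wedgeMul_adj (τ : V →ₗ[A] A) (f : V [⋀^Fin (k + 1)]→ₗ[A] A)
    (v : Fin (k + 2) → V) (a b : Fin (k + 2)) (hab : (a : ℕ) + 1 = b) (hv : v a = v b) :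
    wedgeMul τ f v = 0 := by
  have hne : a ≠ b := by intro h; rw [h] at hab; omega
  rw [wedgeMul_apply]
  have hvanish : ∀ i ∈ Finset.univ, i ∉ ({a, b} : Finset (Fin (k + 2))) →
      (-1 : A) ^ (i : ℕ) * (τ (v i) * f fun j => v (i.succAbove j)) = 0 := by
    intro i _ hi
    simp only [Finset.mem_insert, Finset.mem_singleton, not_or] at hi
    obtain ⟨ja, hja⟩ := Fin.exists_succAbove_eq (Ne.symm hi.1)
    obtain ⟨jb, hjb⟩ := Fin.exists_succAbove_eq (Ne.symm hi.2)
    have hjab : ja ≠ jb := by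
      intro h; rw [h, hjb] at hja; exact hne hja.symm
    have hf : (f fun j => v (i.succAbove j)) = 0 := by
      refine f.map_eq_zero_of_eq _ ?_ hjab
      rw [hja, hjb]; exact hv
    rw [hf, mul_zero, mul_zero]
  rw [← Finset.sum_subset (Finset.subset_univ ({a, b} : Finset (Fin (k + 2)))) hvanish,
    Finset.sum_pair hne]
  have ht : (fun j => v (a.succAbove j)) = fun j => v (b.succAbove j) := by
    funext j
    rcases lt_trichotomy ((j : ℕ)) ((a : ℕ)) with h | h | h
    · rw [Fin.succAbove_of_castSucc_lt _ _ (by rw [Fin.lt_def, Fin.coe_castSucc]; omega),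
        Fin.succAbove_of_castSucc_lt _ _ (by rw [Fin.lt_def, Fin.coe_castSucc]; omega)]
    · have h1 : a.succAbove j = b := by
        rw [Fin.succAbove_of_le_castSucc _ _ (by rw [Fin.le_def, Fin.coe_castSucc]; omega)]
        exact Fin.ext (by rw [Fin.val_succ]; omega)
      have h2 : b.succAbove j = a := by
        rw [Fin.succAbove_of_castSucc_lt _ _ (by rw [Fin.lt_def, Fin.coe_castSucc]; omega)]
        exact Fin.ext (by rw [Fin.coe_castSucc]; omega)
      rw [h1, h2, hv]
    · rw [Fin.succAbove_of_le_castSucc _ _ (by rw [Fin.le_def, Fin.coe_castSucc]; omega),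
        Fin.succAbove_of_le_castSucc _ _ (by rw [Fin.le_def, Fin.coe_castSucc]; omega)]
  rw [ht, hv, ← hab, pow_succ]
  ring

/-- The wedge of a linear form with an alternating map, as an alternating map. -/
def wedge (τ : V →ₗ[A] A) (f : V [⋀^Fin (k + 1)]→ₗ[A] A) : V [⋀^Fin (k + 2)]→ₗ[A] A :=
  ⟨wedgeMul τ f, fun v i j hv hij =>
    alt_of_adjacent (wedgeMul τ f) (wedgeMul_adj τ f) v i j hv hij⟩

theorem wedge_apply (τ : V →ₗ[A] A) (f : V [⋀^Fin (k + 1)]→ₗ[A] A) (v : Fin (k + 2) → V) :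
    wedge τ f v
      = ∑ i : Fin (k + 2), (-1 : A) ^ (i : ℕ) * (τ (v i) * f fun j => v (i.succAbove j)) :=
  wedgeMul_apply τ f v

end KoszulAux

/-- Exactness of the Koszul complex when the coefficients of `s` generate the
unit ideal.  Here `Λ^k V*` is realized as the module of alternating `k`-forms
on the free module `V` with basis `e`, and the differential is the
contraction `ι_s = curryLeft s`.  The complex
`0 → ΛⁿV* → ⋯ → Λ¹V* → A → 0` is exact: at each `Λ^{k+1} V*` every form
killed by `ι_s` is `ι_s` of a form of one higher degree, and the last map
`Λ¹V* → A`, `f ↦ f s`, is surjective. -/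
theorem koszul_complex_exact (A : Type*) [CommRing A]
    (V : Type*) [AddCommGroup V] [Module A V]
    (n : ℕ) (e : Module.Basis (Fin n) A V)
    (c : Fin n → A) (s : V) (hs : s = ∑ i, c i • e i)
    (hunit : Ideal.span (Set.range c) = ⊤) :
    (∀ (k : ℕ) (f : V [⋀^Fin (k + 1)]→ₗ[A] A),
        f.curryLeft s = 0 →
          ∃ g : V [⋀^Fin (k + 2)]→ₗ[A] A, g.curryLeft s = f)
    ∧ ∀ a : A, ∃ f : V [⋀^Fin 1]→ₗ[A] A, f (fun _ => s) = a := by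
  -- obtain a linear form `τ` with `τ s = 1`
  have h1 : (1 : A) ∈ Ideal.span (Set.range c) := by rw [hunit]; trivial
  rw [Ideal.span, Submodule.mem_span_range_iff_exists_fun] at h1
  obtain ⟨t, ht⟩ := h1
  set τ : V →ₗ[A] A := ∑ i, t i • e.coord i with hτdef
  have hτ : τ s = 1 := by
    rw [hτdef, hs]
    simp only [LinearMap.coe_sum, Finset.sum_apply, LinearMap.smul_apply,
      Module.Basis.coord_apply, Module.Basis.repr_sum_self, smul_eq_mul]
    exact ht
  constructor
  · intro k f hf
    refine ⟨KoszulAux.wedge τ f, ?_⟩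
    ext v
    rw [AlternatingMap.curryLeft_apply_apply, KoszulAux.wedge_apply, Fin.sum_univ_succ]
    have h0 : (-1 : A) ^ ((0 : Fin (k + 2)) : ℕ)
        * (τ (Matrix.vecCons s v 0) * f fun j => Matrix.vecCons s v ((0 : Fin (k+2)).succAbove j))
        = f v := by
      simp [hτ, Fin.succAbove_zero]
    have hrest : ∀ i : Fin (k + 1), (-1 : A) ^ ((i.succ : Fin (k + 2)) : ℕ)
        * (τ (Matrix.vecCons s v i.succ)
        * f fun j => Matrix.vecCons s v (i.succ.succAbove j)) = 0 := by
      intro i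
      have htup : (fun j => Matrix.vecCons s v (i.succ.succAbove j))
          = Matrix.vecCons s fun j => v (i.succAbove j) := by
        funext j
        refine Fin.cases ?_ (fun l => ?_) j
        · rw [Fin.succ_succAbove_zero]; rfl
        · rw [Fin.succ_succAbove_succ, Matrix.cons_val_succ, Matrix.cons_val_succ]
      have hz : (f fun j => Matrix.vecCons s v (i.succ.succAbove j)) = 0 := by
        rw [htup]
        have : (f.curryLeft s) (fun j => v (i.succAbove j)) = 0 := by rw [hf]; rfl
        rwa [AlternatingMap.curryLeft_apply_apply] at this
      rw [hz, mul_zero, mul_zero]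
    rw [h0, Finset.sum_eq_zero fun i _ => hrest i, add_zero]
  · intro a
    refine ⟨AlternatingMap.ofSubsingleton A V A 0 (a • τ), ?_⟩
    simp [hτ]
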